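/- For every χ : L → Ĝ and every q : V → Ĝ, the unitary Wilson line operator W^χ maps the charge sector H_q bijectively onto the charge sector H_{q · ∂χ}, where q · ∂χ denotes the pointwise product v ↦ (q v) * ((∂ χ) v). (This is the statement that dressing frame fields built from Wilson lines are isometries between the perspective-neutral space and the Gauss-law-violating charge sectors.) -/
import Mathlib


open Finset

variable {V L : Type*} [Fintype V] [Fintype L] [DecidableEq V]
variable {G : Type*} [CommGroup G] [Fintype G]

/-- The gauge transformation `U^g` on the kinematical Hilbert space `(L → G) → ℂ`. -/
def Ugauge (s t : L → V) (g : V → G) : ((L → G) → ℂ) → ((L → G) → ℂ) :=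
  fun f a => f fun ℓ => (g (s ℓ))⁻¹ * a ℓ * g (t ℓ)

/-- The Wilson line (multiplication) operator `W^χ` for a family of characters `χ`. -/
def Wline (χ : L → (G →* ℂˣ)) : ((L → G) → ℂ) → ((L → G) → ℂ) :=
  fun f a => (((∏ ℓ, χ ℓ (a ℓ))⁻¹ : ℂˣ) : ℂ) • f a

/-- The Gauss law map `∂`, assigning to link character data the vertex charge it excites. -/
def gaussMap (s t : L → V) (χ : L → (G →* ℂˣ)) : V → (G →* ℂˣ) :=
  fun v => (∏ ℓ ∈ univ.filter fun ℓ => s ℓ = v, χ ℓ) *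
    ∏ ℓ ∈ univ.filter fun ℓ => t ℓ = v, (χ ℓ)⁻¹

/-- The charge sector `H_q` for a vertex charge configuration `q`. -/
def chargeSector (s t : L → V) (q : V → (G →* ℂˣ)) : Set ((L → G) → ℂ) :=
  {f | ∀ g : V → G, Ugauge s t g f = (((∏ v, q v (g v)) : ℂˣ) : ℂ) • f}

lemma gaussMap_prod_apply (s t : L → V) (χ : L → (G →* ℂˣ)) (g : V → G) :
    ∏ v, gaussMap s t χ v (g v)
      = (∏ ℓ, χ ℓ (g (s ℓ))) * (∏ ℓ, χ ℓ (g (t ℓ)))⁻¹ := by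
  have h1 : ∏ v, ∏ ℓ ∈ univ.filter fun ℓ => s ℓ = v, χ ℓ (g v)
      = ∏ ℓ, χ ℓ (g (s ℓ)) := by
    rw [← prod_fiberwise univ s (fun ℓ => χ ℓ (g (s ℓ)))]
    exact Finset.prod_congr rfl fun v _ => Finset.prod_congr rfl fun ℓ hℓ => by
      rw [(mem_filter.1 hℓ).2]
  have h2 : ∏ v, ∏ ℓ ∈ univ.filter fun ℓ => t ℓ = v, χ ℓ (g v)
      = ∏ ℓ, χ ℓ (g (t ℓ)) := by
    rw [← prod_fiberwise univ t (fun ℓ => χ ℓ (g (t ℓ)))]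
    exact Finset.prod_congr rfl fun v _ => Finset.prod_congr rfl fun ℓ hℓ => by
      rw [(mem_filter.1 hℓ).2]
  simp only [gaussMap, MonoidHom.mul_apply, MonoidHom.finset_prod_apply,
    MonoidHom.inv_apply, Finset.prod_mul_distrib, Finset.prod_inv_distrib]
  rw [h1, h2]

lemma wilson_mapsTo (s t : L → V) (χ : L → (G →* ℂˣ)) (q : V → (G →* ℂˣ)) :
    Set.MapsTo (Wline χ) (chargeSector s t q)
      (chargeSector s t (q * gaussMap s t χ)) := by
  intro f hf g
  funext a
  have hfa := congrFun (hf g) a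
  simp only [Ugauge, Wline, Pi.smul_apply, smul_eq_mul] at hfa ⊢
  have key : (∏ ℓ, χ ℓ ((g (s ℓ))⁻¹ * a ℓ * g (t ℓ)))⁻¹ * (∏ v, q v (g v))
      = (∏ v, (q * gaussMap s t χ) v (g v)) * (∏ ℓ, χ ℓ (a ℓ))⁻¹ := by
    simp only [Pi.mul_apply, MonoidHom.mul_apply, Finset.prod_mul_distrib,
      gaussMap_prod_apply, map_mul, map_inv, Finset.prod_inv_distrib]
    rw [mul_inv, mul_inv]
    simp only [inv_inv, mul_comm, mul_assoc, mul_left_comm]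
  rw [hfa, ← mul_assoc, ← mul_assoc, ← Units.val_mul, ← Units.val_mul, key]

lemma wline_inv_comp (χ : L → (G →* ℂˣ)) (f : (L → G) → ℂ) :
    Wline (χ⁻¹) (Wline χ f) = f := by
  funext a
  simp only [Wline, Pi.inv_apply, MonoidHom.inv_apply, smul_smul, ← Units.val_mul]
  rw [Finset.prod_inv_distrib]
  simp

lemma wline_comp_inv (χ : L → (G →* ℂˣ)) (f : (L → G) → ℂ) :
    Wline χ (Wline (χ⁻¹) f) = f := by
  funext a
  simp only [Wline, Pi.inv_apply, MonoidHom.inv_apply, smul_smul, ← Units.val_mul]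
  rw [Finset.prod_inv_distrib]
  simp

lemma gaussMap_inv (s t : L → V) (χ : L → (G →* ℂˣ)) :
    gaussMap s t (χ⁻¹) = (gaussMap s t χ)⁻¹ := by
  funext v
  ext x
  simp [gaussMap, MonoidHom.finset_prod_apply, Finset.prod_inv_distrib, mul_comm]

/-- A Wilson line operator `W^χ` maps the charge sector `H_q` bijectively onto the charge
sector `H_{q · ∂χ}`: dressing frame fields are isometries between charge sectors. -/
theorem wilson_bijOn_chargeSectors (s t : L → V) (χ : L → (G →* ℂˣ))
    (q : V → (G →* ℂˣ)) :
    Set.BijOn (Wline χ) (chargeSector s t q)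
      (chargeSector s t (q * gaussMap s t χ)) := by
  have hto := wilson_mapsTo s t χ q
  have hback := wilson_mapsTo s t (χ⁻¹) (q * gaussMap s t χ)
  rw [gaussMap_inv] at hback
  have hq : q * gaussMap s t χ * (gaussMap s t χ)⁻¹ = q := by
    funext v
    ext x
    simp
  rw [hq] at hback
  exact Set.InvOn.bijOn ⟨fun f _ => wline_inv_comp χ f, fun f _ => wline_comp_inv χ f⟩
    hto hback
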